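/- Let (X,d) be a complete metric space, F = {F_i : i ∈ ℕ} a countable family of contraction maps, and ρ = (ρ_i) a probability sequence (0 < ρ_i < 1, Σρ_i = 1). If μ is an invariant measure for (F, ρ), i.e. μ = Σ_i ρ_i (F_i)_♯μ, then the support of μ is an invariant set for F: supp μ = cl(⋃_i F_i(supp μ)). -/

import Mathlib

open Metric Set MeasureTheory
open scoped NNReal ENNReal

/-- The support of a measure on a metric space: points all of whose balls have
positive measure. -/
def msupp {X : Type*} [MetricSpace X] [MeasurableSpace X] (μ : Measure X) : Set X :=
  {x : X | ∀ ε : ℝ, 0 < ε → 0 < μ (Metric.ball x ε)}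

theorem support_invariant_measure_is_invariant_set
    {X : Type*} [MetricSpace X] [CompleteSpace X] [MeasurableSpace X] [BorelSpace X]
    (F : ℕ → X → X) (hF : ∀ i, ∃ r : ℝ≥0, ContractingWith r (F i))
    (ρ : ℕ → ℝ≥0) (hρ : ∀ i, 0 < ρ i ∧ ρ i < 1) (hρs : ∑' i, ρ i = 1)
    (μ : Measure X) [IsProbabilityMeasure μ]
    (hinv : μ = Measure.sum (fun i => (ρ i : ℝ≥0∞) • μ.map (F i))) :
    msupp μ = closure (⋃ i : ℕ, F i '' msupp μ) := by
  classical
  -- X is nonempty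
  have hX : Nonempty X := by
    rcases isEmpty_or_nonempty X with hX | hX
    · exfalso
      have h1 : μ Set.univ = 1 := measure_univ
      rw [Set.univ_eq_empty_iff.mpr hX] at h1
      simp at h1
    · exact hX
  -- contraction data
  choose r hr using hF
  set r' : ℕ → ℝ≥0 := fun i => max (r i) (1 / 2) with hr'def
  have hlip : ∀ i, LipschitzWith (r' i) (F i) := fun i => ((hr i).2).weaken (le_max_left _ _)
  have hr'lt : ∀ i, r' i < 1 := fun i =>
    max_lt (hr i).1 (by exact_mod_cast (by norm_num : (1:ℝ)/2 < 1))
  have hr'pos : ∀ i, (0 : ℝ≥0) < r' i := fun i =>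
    lt_of_lt_of_le (by exact_mod_cast (by norm_num : (0:ℝ) < 1/2)) (le_max_right _ _)
  have hcont : ∀ i, Continuous (F i) := fun i => (hlip i).continuous
  have hFmeas : ∀ i, Measurable (F i) := fun i => (hcont i).measurable
  -- invariance, set version
  have hset : ∀ E : Set X, MeasurableSet E →
      μ E = ∑' i, (ρ i : ℝ≥0∞) * μ (F i ⁻¹' E) := by
    intro E hE
    conv_lhs => rw [hinv]
    rw [Measure.sum_apply _ hE]
    refine tsum_congr fun i => ?_
    rw [Measure.smul_apply, Measure.map_apply (hFmeas i) hE, smul_eq_mul]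
  -- invariance, lintegral version
  have hlint : ∀ f : X → ℝ≥0∞, Measurable f →
      ∫⁻ x, f x ∂μ = ∑' i, (ρ i : ℝ≥0∞) * ∫⁻ x, f (F i x) ∂μ := by
    intro f hf
    conv_lhs => rw [hinv]
    rw [lintegral_sum_measure]
    refine tsum_congr fun i => ?_
    rw [lintegral_smul_measure, lintegral_map hf (hFmeas i), smul_eq_mul]
  -- msupp is closed
  have hclosed : IsClosed (msupp μ) := by
    rw [← isOpen_compl_iff, Metric.isOpen_iff]
    intro x hx
    have hx' : ∃ ε : ℝ, 0 < ε ∧ μ (ball x ε) = 0 := by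
      by_contra h
      push_neg at h
      exact hx fun ε hε => pos_iff_ne_zero.mpr (h ε hε)
    obtain ⟨ε, hε, hμ0⟩ := hx'
    refine ⟨ε / 2, by linarith, fun y hy => ?_⟩
    intro hymem
    have hpos : (0 : ℝ≥0∞) < μ (ball y (ε / 2)) := hymem (ε / 2) (by linarith)
    have hsub : ball y (ε / 2) ⊆ ball x ε := by
      intro z hz
      rw [mem_ball] at hz hy ⊢
      calc dist z x ≤ dist z y + dist y x := dist_triangle _ _ _
        _ < ε / 2 + ε / 2 := by linarith
        _ = ε := by ring
    exact absurd (measure_mono_null hsub hμ0) hpos.ne'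
  -- F i maps msupp into msupp
  have hmaps : ∀ i, ∀ x ∈ msupp μ, F i x ∈ msupp μ := by
    intro i x hx ε hε
    have hsub : ball x ε ⊆ F i ⁻¹' ball (F i x) ε := by
      intro y hy
      have h1 : dist (F i y) (F i x) ≤ (r' i : ℝ) * dist y x := (hlip i).dist_le_mul y x
      have h2 : (r' i : ℝ) ≤ 1 := by exact_mod_cast (hr'lt i).le
      have h3 : (r' i : ℝ) * dist y x ≤ dist y x :=
        mul_le_of_le_one_left dist_nonneg h2
      exact mem_ball.mpr (lt_of_le_of_lt (h1.trans h3) (mem_ball.mp hy))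
    have key : (ρ i : ℝ≥0∞) * μ (F i ⁻¹' ball (F i x) ε) ≤ μ (ball (F i x) ε) := by
      rw [hset _ measurableSet_ball]
      exact ENNReal.le_tsum i
    have h3 : (0 : ℝ≥0∞) < (ρ i : ℝ≥0∞) * μ (ball x ε) := by
      apply ENNReal.mul_pos
      · exact_mod_cast (hρ i).1.ne'
      · exact (hx ε hε).ne'
    exact lt_of_lt_of_le h3 ((mul_le_mul_right (measure_mono hsub) _).trans key)
  -- a separable closed invariant set
  obtain ⟨x0⟩ := hX
  set g0 : List ℕ → X := fun l => l.foldr (fun i y => F i y) x0 with hg0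
  set S : Set X := Set.range g0 with hSdef
  have hScount : S.Countable := Set.countable_range g0
  have hSne : S.Nonempty := ⟨g0 [], Set.mem_range_self _⟩
  set C : Set X := closure S with hCdef
  have hCne : C.Nonempty := hSne.closure
  have hCclosed : IsClosed C := isClosed_closure
  have hCmaps : ∀ i, ∀ y ∈ C, F i y ∈ C := by
    intro i y hy
    have h1 : F i '' C ⊆ closure (F i '' S) := image_closure_subset_closure_image (hcont i)
    have h2 : F i '' S ⊆ S := by
      rintro _ ⟨_, ⟨l, rfl⟩, rfl⟩
      exact ⟨i :: l, rfl⟩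
    exact closure_mono h2 (h1 (mem_image_of_mem _ hy))
  have hdmeas : Measurable fun x => infDist x C := (continuous_infDist_pt C).measurable
  -- contraction property for infDist
  have hd : ∀ i x, infDist (F i x) C ≤ (r' i : ℝ) * infDist x C := by
    intro i x
    by_contra hcon
    push_neg at hcon
    have hrpos : (0 : ℝ) < (r' i : ℝ) := by exact_mod_cast hr'pos i
    set ε : ℝ := (infDist (F i x) C - (r' i : ℝ) * infDist x C) / (r' i : ℝ) with hεdef
    have hε : 0 < ε := by
      apply div_pos _ hrpos
      linarith
    obtain ⟨y, hyC, hxy⟩ := (infDist_lt_iff hCne).mp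
      (lt_add_of_pos_right (infDist x C) hε)
    have h1 : infDist (F i x) C ≤ dist (F i x) (F i y) :=
      infDist_le_dist_of_mem (hCmaps i y hyC)
    have h2 : dist (F i x) (F i y) ≤ (r' i : ℝ) * dist x y := (hlip i).dist_le_mul x y
    have h3 : (r' i : ℝ) * dist x y < (r' i : ℝ) * (infDist x C + ε) :=
      mul_lt_mul_of_pos_left hxy hrpos
    have h4 : (r' i : ℝ) * (infDist x C + ε) = infDist (F i x) C := by
      rw [hεdef, mul_add, mul_div_assoc', mul_comm (r' i : ℝ) (_ - _), mul_div_assoc,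
        div_self hrpos.ne', mul_one]
      ring
    linarith
  -- the coefficients
  have hρsum : Summable ρ := by
    by_contra h
    rw [tsum_eq_zero_of_not_summable h] at hρs
    exact one_ne_zero hρs.symm
  set q : ℕ → ℝ≥0 := fun i => 1 - r' i with hqdef
  have hq : ∀ i, r' i + q i = 1 := fun i => add_tsub_cancel_of_le (hr'lt i).le
  set s : ℝ≥0∞ := ∑' i, (ρ i : ℝ≥0∞) * (r' i : ℝ≥0∞) with hsdef
  set u : ℝ≥0∞ := ∑' i, (ρ i : ℝ≥0∞) * (q i : ℝ≥0∞) with hudef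
  have hsum1 : s + u = 1 := by
    rw [hsdef, hudef, ← ENNReal.tsum_add]
    have h1 : ∀ i, (ρ i : ℝ≥0∞) * (r' i : ℝ≥0∞) + (ρ i : ℝ≥0∞) * (q i : ℝ≥0∞)
        = (ρ i : ℝ≥0∞) := by
      intro i
      rw [← mul_add, ← ENNReal.coe_add, hq i, ENNReal.coe_one, mul_one]
    rw [tsum_congr h1, ← ENNReal.coe_tsum hρsum, hρs, ENNReal.coe_one]
  have hu0 : u ≠ 0 := by
    have hle : (ρ 0 : ℝ≥0∞) * (q 0 : ℝ≥0∞) ≤ u := ENNReal.le_tsum 0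
    have hne : (ρ 0 : ℝ≥0∞) * (q 0 : ℝ≥0∞) ≠ 0 := by
      apply mul_ne_zero
      · exact_mod_cast (hρ 0).1.ne'
      · have : 0 < q 0 := tsub_pos_of_lt (hr'lt 0)
        exact_mod_cast this.ne'
    exact fun h => hne (le_antisymm (h ▸ hle) zero_le)
  have hs1 : s ≤ 1 := hsum1 ▸ self_le_add_right s u
  have hu1 : u ≤ 1 := hsum1 ▸ self_le_add_left u s
  have hsfin : s ≠ ∞ := (hs1.trans_lt ENNReal.one_lt_top).ne
  have hufin : u ≠ ∞ := (hu1.trans_lt ENNReal.one_lt_top).ne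
  -- the main estimate
  have main : ∀ δ M : ℝ, 0 < δ → 0 < M →
      μ ({x | δ < infDist x C} ∩ {x | infDist x C ≤ M}) = 0 := by
    intro δ M hδ hM
    set d : X → ℝ := fun x => infDist x C with hddef
    set g : X → ℝ≥0∞ := fun x => ENNReal.ofReal (min (d x) M) with hgdef
    have hgmeas : Measurable g := (hdmeas.min measurable_const).ennreal_ofReal
    set t : ℝ≥0∞ := ∫⁻ x, g x ∂μ with htdef
    have ht_le : t ≤ ENNReal.ofReal M := by
      calc t ≤ ∫⁻ _, ENNReal.ofReal M ∂μ :=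
            lintegral_mono fun x => ENNReal.ofReal_le_ofReal (min_le_right _ _)
        _ = ENNReal.ofReal M := by rw [lintegral_const, measure_univ, mul_one]
    have htfin : t ≠ ∞ := (lt_of_le_of_lt ht_le ENNReal.ofReal_lt_top).ne
    set A : Set X := {x | M < d x} with hAdef
    have hAmeas : MeasurableSet A := measurableSet_lt measurable_const hdmeas
    set B : Set X := {x | δ < d x} ∩ {x | d x ≤ M} with hBdef
    have hBmeas : MeasurableSet B :=
      (measurableSet_lt measurable_const hdmeas).inter
        (measurableSet_le hdmeas measurable_const)
    -- lower bound (a)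
    have hA_le : ∀ x, A.indicator (fun _ => ENNReal.ofReal M) x
        + B.indicator (fun _ => ENNReal.ofReal δ) x ≤ g x := by
      intro x
      by_cases hxA : x ∈ A
      · have hxM : M < d x := hxA
        have hxB : x ∉ B := fun hxB => absurd hxB.2 (not_le.mpr hxM)
        rw [Set.indicator_of_mem hxA, Set.indicator_of_notMem hxB, add_zero]
        exact ENNReal.ofReal_le_ofReal (le_min hxM.le le_rfl)
      · rw [Set.indicator_of_notMem hxA, zero_add]
        by_cases hxB : x ∈ B
        · rw [Set.indicator_of_mem hxB]
          exact ENNReal.ofReal_le_ofReal (le_min hxB.1.le (hxB.1.le.trans hxB.2))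
        · rw [Set.indicator_of_notMem hxB]
          exact zero_le
    have ha : ENNReal.ofReal M * μ A + ENNReal.ofReal δ * μ B ≤ t := by
      have h0 := lintegral_mono (μ := μ) hA_le
      rwa [lintegral_add_left (measurable_const.indicator hAmeas),
        lintegral_indicator_const hAmeas, lintegral_indicator_const hBmeas] at h0
    -- pointwise bound for (b)
    set K : ℝ≥0∞ := ENNReal.ofReal M * μ A with hKdef
    have hKfin : K ≠ ∞ := ENNReal.mul_ne_top ENNReal.ofReal_ne_top (measure_ne_top μ A)
    have hpt : ∀ i x, g (F i x) ≤ (r' i : ℝ≥0∞) * g x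
        + (q i : ℝ≥0∞) * A.indicator (fun _ => ENNReal.ofReal M) x := by
      intro i x
      by_cases hxA : x ∈ A
      · have hxM : M < d x := hxA
        rw [Set.indicator_of_mem hxA]
        have h1 : g (F i x) ≤ ENNReal.ofReal M :=
          ENNReal.ofReal_le_ofReal (min_le_right _ _)
        have h2 : g x = ENNReal.ofReal M := by
          rw [hgdef]
          simp only []
          rw [min_eq_right hxM.le]
        rw [h2, ← add_mul]
        have h3 : (r' i : ℝ≥0∞) + (q i : ℝ≥0∞) = 1 := by
          rw [← ENNReal.coe_add, hq i, ENNReal.coe_one]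
        rw [h3, one_mul]
        exact h1
      · rw [Set.indicator_of_notMem hxA, mul_zero, add_zero]
        have hdx : d x ≤ M := not_lt.mp hxA
        have h2 : min (d (F i x)) M ≤ (r' i : ℝ) * min (d x) M := by
          rw [min_eq_left hdx]
          calc min (d (F i x)) M ≤ d (F i x) := min_le_left _ _
            _ ≤ (r' i : ℝ) * d x := hd i x
        calc g (F i x) ≤ ENNReal.ofReal ((r' i : ℝ) * min (d x) M) :=
              ENNReal.ofReal_le_ofReal h2
          _ = (r' i : ℝ≥0∞) * g x := by
              rw [ENNReal.ofReal_mul (r' i).coe_nonneg, ENNReal.ofReal_coe_nnreal]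
    have hint : ∀ i, ∫⁻ x, g (F i x) ∂μ ≤ (r' i : ℝ≥0∞) * t + (q i : ℝ≥0∞) * K := by
      intro i
      calc ∫⁻ x, g (F i x) ∂μ
          ≤ ∫⁻ x, ((r' i : ℝ≥0∞) * g x
              + (q i : ℝ≥0∞) * A.indicator (fun _ => ENNReal.ofReal M) x) ∂μ :=
            lintegral_mono (hpt i)
        _ = (r' i : ℝ≥0∞) * t + (q i : ℝ≥0∞) * K := by
            rw [lintegral_add_left (hgmeas.const_mul _),
              lintegral_const_mul _ hgmeas,
              lintegral_const_mul _ (measurable_const.indicator hAmeas),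
              lintegral_indicator_const hAmeas]
    have hb : t ≤ s * t + u * K := by
      calc t = ∑' i, (ρ i : ℝ≥0∞) * ∫⁻ x, g (F i x) ∂μ := hlint g hgmeas
        _ ≤ ∑' i, (ρ i : ℝ≥0∞) * ((r' i : ℝ≥0∞) * t + (q i : ℝ≥0∞) * K) :=
            ENNReal.tsum_le_tsum fun i => mul_le_mul_right (hint i) _
        _ = s * t + u * K := by
            have h5 : ∀ i, (ρ i : ℝ≥0∞) * ((r' i : ℝ≥0∞) * t + (q i : ℝ≥0∞) * K)
                = (ρ i : ℝ≥0∞) * (r' i : ℝ≥0∞) * t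
                  + (ρ i : ℝ≥0∞) * (q i : ℝ≥0∞) * K := fun i => by ring
            rw [tsum_congr h5, ENNReal.tsum_add, ENNReal.tsum_mul_right,
              ENNReal.tsum_mul_right, hsdef, hudef]
    have htK : t ≤ K := by
      by_contra hlt
      push_neg at hlt
      have h1 : u * K < u * t := ENNReal.mul_lt_mul_right hu0 hufin hlt
      have h2 : s * t + u * K < s * t + u * t :=
        ENNReal.add_lt_add_left (ENNReal.mul_ne_top hsfin htfin) h1
      have h3 : s * t + u * t = t := by rw [← add_mul, hsum1, one_mul]
      exact absurd (hb.trans_lt (h2.trans_eq h3)) (lt_irrefl t)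
    have h4 : ENNReal.ofReal δ * μ B ≤ 0 :=
      ENNReal.le_of_add_le_add_left hKfin (by rw [add_zero]; exact ha.trans htK)
    rcases mul_eq_zero.mp (le_antisymm h4 zero_le) with h | h
    · exact absurd h (by simp [ENNReal.ofReal_eq_zero, not_le, hδ])
    · exact h
  -- μ vanishes outside C
  have hCc1 : ∀ δ : ℝ, 0 < δ → μ {x | δ < infDist x C} = 0 := by
    intro δ hδ
    have hEq : {x | δ < infDist x C}
        = ⋃ n : ℕ, ({x | δ < infDist x C} ∩ {x | infDist x C ≤ (n : ℝ) + 1}) := by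
      ext x
      simp only [Set.mem_iUnion, Set.mem_inter_iff, Set.mem_setOf_eq]
      constructor
      · intro h
        obtain ⟨n, hn⟩ := exists_nat_ge (infDist x C)
        exact ⟨n, h, by linarith⟩
      · rintro ⟨n, h, -⟩
        exact h
    rw [hEq]
    exact measure_iUnion_null fun n => main δ ((n : ℝ) + 1) hδ (by positivity)
  have hCcnull : μ Cᶜ = 0 := by
    have hsub : Cᶜ ⊆ ⋃ n : ℕ, {x | 1 / ((n : ℝ) + 1) < infDist x C} := by
      intro x hx
      have h0 : 0 < infDist x C := by
        rcases (infDist_nonneg (x := x) (s := C)).lt_or_eq with h | h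
        · exact h
        · exfalso
          apply hx
          have hmem : x ∈ closure C := (mem_closure_iff_infDist_zero hCne).mpr h.symm
          rwa [hCclosed.closure_eq] at hmem
      obtain ⟨n, hn⟩ := exists_nat_one_div_lt h0
      exact Set.mem_iUnion.mpr ⟨n, hn⟩
    exact measure_mono_null hsub
      (measure_iUnion_null fun n => hCc1 _ (by positivity))
  -- μ vanishes outside msupp
  have hsuppnull : μ (msupp μ)ᶜ = 0 := by
    have hrad : ∀ x ∈ (msupp μ)ᶜ, ∃ ε : ℝ, 0 < ε ∧ μ (ball x ε) = 0 := by
      intro x hx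
      by_contra h
      push_neg at h
      exact hx fun ε hε => pos_iff_ne_zero.mpr (h ε hε)
    obtain ⟨c, hccount, hcdense⟩ :
        ∃ c : Set X, c.Countable ∧ (msupp μ)ᶜ ∩ C ⊆ closure c :=
      ((hScount.isSeparable).closure).mono inter_subset_right
    set P : Set (X × ℚ) := {p | p.1 ∈ c ∧ μ (ball p.1 (p.2 : ℝ)) = 0} with hPdef
    have hPsub : P ⊆ c ×ˢ (Set.univ : Set ℚ) := fun p hp => ⟨hp.1, Set.mem_univ _⟩
    have hPcount : P.Countable :=
      Set.Countable.mono hPsub (hccount.prod Set.countable_univ)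
    have hcover : (msupp μ)ᶜ ∩ C ⊆ ⋃ p ∈ P, ball p.1 (p.2 : ℝ) := by
      intro x hx
      obtain ⟨ε, hε, hεnull⟩ := hrad x hx.1
      have hxc : x ∈ closure c := hcdense hx
      obtain ⟨y, hyc, hxy⟩ := Metric.mem_closure_iff.mp hxc (ε / 4) (by linarith)
      obtain ⟨qq, hq1, hq2⟩ := exists_rat_btwn (show ε / 4 < ε / 2 by linarith)
      have hsub : ball y (qq : ℝ) ⊆ ball x ε := by
        intro z hz
        rw [mem_ball] at hz ⊢
        have ht1 : dist z x ≤ dist z y + dist y x := dist_triangle _ _ _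
        have ht2 : dist y x = dist x y := dist_comm _ _
        linarith
      have hnull : μ (ball y (qq : ℝ)) = 0 := measure_mono_null hsub hεnull
      have hpP : ((y, qq) : X × ℚ) ∈ P := ⟨hyc, hnull⟩
      exact Set.mem_biUnion hpP (mem_ball.mpr (by exact lt_trans hxy hq1))
    have h1 : μ ((msupp μ)ᶜ ∩ C) = 0 :=
      measure_mono_null hcover
        ((measure_biUnion_null_iff hPcount).mpr fun p hp => hp.2)
    have h2 : (msupp μ)ᶜ ⊆ ((msupp μ)ᶜ ∩ C) ∪ Cᶜ := by
      intro x hx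
      by_cases hxC : x ∈ C
      · exact Or.inl ⟨hx, hxC⟩
      · exact Or.inr hxC
    exact measure_mono_null h2 (measure_union_null h1 hCcnull)
  -- conclusion
  set A' : Set X := closure (⋃ i : ℕ, F i '' msupp μ) with hA'def
  have hA'closed : IsClosed A' := isClosed_closure
  have hA'null : μ A'ᶜ = 0 := by
    rw [hset _ hA'closed.measurableSet.compl]
    have hz : ∀ i, μ (F i ⁻¹' A'ᶜ) = 0 := by
      intro i
      apply measure_mono_null _ hsuppnull
      intro x hx hxsupp
      exact hx (subset_closure (Set.mem_iUnion.mpr ⟨i, mem_image_of_mem _ hxsupp⟩))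
    have hz' : ∀ i, (ρ i : ℝ≥0∞) * μ (F i ⁻¹' A'ᶜ) = 0 := fun i => by
      rw [hz i, mul_zero]
    rw [tsum_congr hz', tsum_zero]
  apply Set.Subset.antisymm
  · intro x hx
    have hx' : x ∈ closure A' := by
      rw [Metric.mem_closure_iff]
      intro ε hε
      by_contra h
      push_neg at h
      have hsub : ball x ε ⊆ A'ᶜ := by
        intro z hz hzA
        exact absurd (mem_ball'.mp hz) (not_lt.mpr (h z hzA))
      exact absurd (measure_mono_null hsub hA'null) (hx ε hε).ne'
    rwa [hA'closed.closure_eq] at hx'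
  · rw [hA'def]
    apply closure_minimal _ hclosed
    intro y hy
    rw [Set.mem_iUnion] at hy
    obtain ⟨i, x, hx, rfl⟩ := hy
    exact hmaps i x hx
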